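/- arXiv:1804.09471 — 2 statements merged into one kernel-verified Lean document; each statement's English description precedes it below -/
import Mathlib

section
/- Let w : [0,T] → ℝ be continuous and nonvanishing with w(t) > 0 on (0,T], and let x, y, z : [0,T] → ℝ be C¹ functions with x(0) = y(0) = z(0) = 0 satisfying the Engel curve equations y'(t) = z(t) x'(t) and z'(t) = w(t) x'(t) for all t, where moreover the curve parameter satisfies w(t) = t. If y(T) = 0, then z ≡ 0, y ≡ 0, and x ≡ 0 on [0,T]. (Bryant–Hsu rigidity via Inaba's computation.) -/
open Set Filter Topology

/-- **Bryant–Hsu rigidity (via Inaba's computation).**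
Let `γ(t) = (x(t), y(t), z(t), w(t))`, `t ∈ [0,T]`, be a C¹ curve in the Engel–Darboux
chart tangent to the Engel structure `𝒟 = ker(dy − z dx) ∩ ker(dz − w dx)`, i.e.
`y' = z·x'` and `z' = w·x'`, whose last coordinate is `w(t) = t` (so `w` is continuous
and positive on `(0,T]`), starting at the origin.  If also `y(T) = 0`, then
`x ≡ y ≡ z ≡ 0` on `[0,T]`: the curve is the Cauchy characteristic through the origin. -/
theorem bryant_hsu_rigidity
    {T : ℝ} (hT : 0 < T)
    (x y z x' y' z' : ℝ → ℝ) (w : ℝ → ℝ) (hw : ∀ t, w t = t)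
    (hx : ∀ t ∈ Icc 0 T, HasDerivAt x (x' t) t)
    (hy : ∀ t ∈ Icc 0 T, HasDerivAt y (y' t) t)
    (hz : ∀ t ∈ Icc 0 T, HasDerivAt z (z' t) t)
    (hx' : ContinuousOn x' (Icc 0 T))
    (hy' : ContinuousOn y' (Icc 0 T))
    (hz' : ContinuousOn z' (Icc 0 T))
    (hD1 : ∀ t ∈ Icc 0 T, y' t = z t * x' t)
    (hD2 : ∀ t ∈ Icc 0 T, z' t = w t * x' t)
    (hx0 : x 0 = 0) (hy0 : y 0 = 0) (hz0 : z 0 = 0)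
    (hyT : y T = 0) :
    ∀ t ∈ Icc 0 T, z t = 0 ∧ y t = 0 ∧ x t = 0 := by
  have h0T : (0 : ℝ) ∈ Icc 0 T := ⟨le_refl 0, hT.le⟩
  have hTT : T ∈ Icc (0 : ℝ) T := ⟨hT.le, le_refl T⟩
  -- rewrite hD2 using w t = t
  have hD2' : ∀ t ∈ Icc 0 T, z' t = t * x' t := fun t ht => by rw [hD2 t ht, hw]
  -- z'(0) = 0
  have hz'0 : z' 0 = 0 := by rw [hD2' 0 h0T]; ring
  -- the Inaba functional  H t = y t - z t ^ 2 / (2 t)  (equals 0 at t = 0 by junk division)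
  set H : ℝ → ℝ := fun t => y t - z t ^ 2 / (2 * t) with hHdef
  have hH0 : H 0 = 0 := by simp [hHdef, hy0]
  -- derivative of H at points t ≠ 0 of [0,T]
  have hHderiv : ∀ t ∈ Icc 0 T, t ≠ 0 → HasDerivAt H (z t ^ 2 / (2 * t ^ 2)) t := by
    intro t ht ht0
    have h2t : (2 : ℝ) * t ≠ 0 := mul_ne_zero two_ne_zero ht0
    have hden : HasDerivAt (fun s : ℝ => 2 * s) 2 t := by
      simpa using (hasDerivAt_id t).const_mul (2 : ℝ)
    have hnum : HasDerivAt (fun s => z s ^ 2) (2 * z t ^ 1 * z' t) t := (hz t ht).pow 2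
    have hfrac := hnum.div hden h2t
    have hH := (hy t ht).sub hfrac
    refine hH.congr_deriv ?_
    rw [hD1 t ht, hD2' t ht]
    field_simp
    ring
  -- H is continuous at 0 from within [0,T]
  have hcont0 : ContinuousWithinAt H (Icc 0 T) 0 := by
    rw [← continuousWithinAt_diff_self]
    have hslope : Tendsto (fun t => z t / t) (𝓝[≠] (0:ℝ)) (𝓝 0) := by
      have := hasDerivAt_iff_tendsto_slope.mp (hz 0 h0T)
      rw [hz'0] at this
      refine this.congr fun t => ?_
      simp [slope, hz0, div_eq_inv_mul]
    have hzc : ContinuousAt z 0 := (hz 0 h0T).continuousAt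
    have hz2 : Tendsto (fun t => z t ^ 2 / (2 * t)) (𝓝[≠] (0:ℝ)) (𝓝 0) := by
      have h1 : Tendsto (fun t => (z t / t) * (z t / 2)) (𝓝[≠] (0:ℝ)) (𝓝 (0 * (z 0 / 2))) := by
        apply hslope.mul
        exact ((hzc.continuousWithinAt).div_const 2)
      rw [zero_mul] at h1
      refine h1.congr' ?_
      filter_upwards [self_mem_nhdsWithin] with t ht
      have ht0 : t ≠ 0 := ht
      field_simp
    have hyc : Tendsto y (𝓝[≠] (0:ℝ)) (𝓝 0) := by
      have h := (hy 0 h0T).continuousAt.continuousWithinAt (s := {(0:ℝ)}ᶜ)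
      unfold ContinuousWithinAt at h
      rwa [hy0] at h
    have : Tendsto H (𝓝[≠] (0:ℝ)) (𝓝 (0 - 0)) := hyc.sub hz2
    rw [sub_zero] at this
    unfold ContinuousWithinAt
    rw [hH0]
    exact this.mono_left (nhdsWithin_mono _ fun s hs => hs.2)
  -- H is continuous on [0,T]
  have hHcont : ContinuousOn H (Icc 0 T) := by
    intro t ht
    rcases eq_or_ne t 0 with rfl | ht0
    · exact hcont0
    · exact ((hHderiv t ht ht0).continuousAt).continuousWithinAt
  -- H is monotone on [0,T]
  have hmono : MonotoneOn H (Icc 0 T) := by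
    apply monotoneOn_of_deriv_nonneg (convex_Icc 0 T) hHcont
    · intro t ht
      rw [interior_Icc] at ht
      exact ((hHderiv t (Ioo_subset_Icc_self ht) (ne_of_gt ht.1)).differentiableAt).differentiableWithinAt
    · intro t ht
      rw [interior_Icc] at ht
      rw [(hHderiv t (Ioo_subset_Icc_self ht) (ne_of_gt ht.1)).deriv]
      positivity
  -- H vanishes identically on [0,T]
  have hHzero : ∀ t ∈ Icc 0 T, H t = 0 := by
    have hHT : H T ≤ 0 := by
      have : H T = - (z T ^ 2 / (2 * T)) := by simp [hHdef, hyT]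
      rw [this]
      have : 0 ≤ z T ^ 2 / (2 * T) := by positivity
      linarith
    intro t ht
    have h1 : H 0 ≤ H t := hmono h0T ht ht.1
    have h2 : H t ≤ H T := hmono ht hTT ht.2
    rw [hH0] at h1
    linarith
  -- hence z vanishes on (0,T)
  have hzIoo : ∀ t ∈ Ioo (0:ℝ) T, z t = 0 := by
    intro t ht
    have htIcc := Ioo_subset_Icc_self ht
    have ht0 : t ≠ 0 := ne_of_gt ht.1
    have hloc : H =ᶠ[𝓝 t] fun _ => (0:ℝ) := by
      filter_upwards [Ioo_mem_nhds ht.1 ht.2] with s hs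
      exact hHzero s (Ioo_subset_Icc_self hs)
    have h1 : HasDerivAt (fun _ : ℝ => (0:ℝ)) (z t ^ 2 / (2 * t ^ 2)) t :=
      (hHderiv t htIcc ht0).congr_of_eventuallyEq hloc.symm
    have h2 : HasDerivAt (fun _ : ℝ => (0:ℝ)) 0 t := hasDerivAt_const t 0
    have := h1.unique h2
    field_simp at this
    simpa using this
  -- z vanishes at T as well (from H T = 0 and y T = 0)
  have hzT : z T = 0 := by
    have := hHzero T hTT
    simp only [hHdef, hyT, zero_sub, neg_eq_zero] at this
    field_simp at this
    simpa using this
  -- z vanishes on all of [0,T]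
  have hzall : ∀ t ∈ Icc 0 T, z t = 0 := by
    intro t ht
    rcases eq_or_ne t 0 with rfl | h0
    · exact hz0
    rcases eq_or_ne t T with rfl | hTne
    · exact hzT
    exact hzIoo t ⟨lt_of_le_of_ne ht.1 (Ne.symm h0), lt_of_le_of_ne ht.2 hTne⟩
  -- x' vanishes on (0,T)
  have hx'Ioo : ∀ t ∈ Ioo (0:ℝ) T, x' t = 0 := by
    intro t ht
    have htIcc := Ioo_subset_Icc_self ht
    have hloc : z =ᶠ[𝓝 t] fun _ => (0:ℝ) := by
      filter_upwards [Ioo_mem_nhds ht.1 ht.2] with s hs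
      exact hzall s (Ioo_subset_Icc_self hs)
    have h1 : HasDerivAt (fun _ : ℝ => (0:ℝ)) (z' t) t :=
      (hz t htIcc).congr_of_eventuallyEq hloc.symm
    have h2 := h1.unique (hasDerivAt_const t 0)
    have := hD2' t htIcc
    rw [h2] at this
    exact (mul_eq_zero.mp this.symm).resolve_left (ne_of_gt ht.1)
  -- x' vanishes at the endpoints by continuity
  have hne : (𝓝[Ioo (0:ℝ) T] (0:ℝ)).NeBot := by
    rw [← mem_closure_iff_nhdsWithin_neBot, closure_Ioo (ne_of_lt hT)]
    exact h0T
  have hx'0 : x' 0 = 0 := by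
    have h1 : Tendsto x' (𝓝[Ioo (0:ℝ) T] 0) (𝓝 (x' 0)) :=
      (hx'.continuousWithinAt h0T).mono_left (nhdsWithin_mono _ Ioo_subset_Icc_self)
    have h2 : Tendsto x' (𝓝[Ioo (0:ℝ) T] 0) (𝓝 0) := by
      refine tendsto_const_nhds.congr' ?_
      filter_upwards [self_mem_nhdsWithin] with s hs
      exact (hx'Ioo s hs).symm
    exact tendsto_nhds_unique h1 h2
  -- x' vanishes on [0,T)
  have hx'Ico : ∀ t ∈ Ico (0:ℝ) T, x' t = 0 := by
    intro t ht
    rcases eq_or_ne t 0 with rfl | h0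
    · exact hx'0
    · exact hx'Ioo t ⟨lt_of_le_of_ne ht.1 (Ne.symm h0), ht.2⟩
  -- hence x is constant, equal to x 0 = 0
  have hxcont : ContinuousOn x (Icc 0 T) := fun t ht =>
    (hx t ht).continuousAt.continuousWithinAt
  have hxconst : ∀ t ∈ Icc 0 T, x t = x 0 := by
    apply constant_of_has_deriv_right_zero hxcont
    intro t ht
    have := (hx t (Ico_subset_Icc_self ht)).hasDerivWithinAt (s := Ici t)
    rwa [hx'Ico t ht] at this
  -- y' vanishes on [0,T]
  have hy'zero : ∀ t ∈ Icc 0 T, y' t = 0 := fun t ht => by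
    rw [hD1 t ht, hzall t ht, zero_mul]
  have hycont : ContinuousOn y (Icc 0 T) := fun t ht =>
    (hy t ht).continuousAt.continuousWithinAt
  have hyconst : ∀ t ∈ Icc 0 T, y t = y 0 := by
    apply constant_of_has_deriv_right_zero hycont
    intro t ht
    have := (hy t (Ico_subset_Icc_self ht)).hasDerivWithinAt (s := Ici t)
    rwa [hy'zero t (Ico_subset_Icc_self ht)] at this
  intro t ht
  refine ⟨hzall t ht, ?_, ?_⟩
  · rw [hyconst t ht, hy0]
  · rw [hxconst t ht, hx0]
end

section
/- Let w : [0,T] → ℝ with w(t) = t, and let x, y, z : [0,T] → ℝ be C¹ with x(0)=y(0)=z(0)=0, y' = z x', z' = t x'. Then y(T) = z(T)²/(2T) + ∫₀ᵀ z(t)²/(2t²) dt; in particular y(T) ≥ z(T)²/(2T) ≥ 0, with equality y(T)=0 iff z ≡ 0 on [0,T]. (Inaba's integral formula for the accessible set.) -/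
open Set intervalIntegral Filter Topology

/-- **Inaba's integral formula for the accessible set.**
For a C¹ curve `(x(t), y(t), z(t), t)`, `t ∈ [0,T]`, tangent to the standard Engel
structure (`y' = z·x'`, `z' = t·x'`) and starting at the origin, one has
`y(T) = z(T)²/(2T) + ∫₀ᵀ z(t)²/(2t²) dt`; in particular `y(T) ≥ z(T)²/(2T) ≥ 0`,
with `y(T) = 0` if and only if `z ≡ 0` on `[0,T]`. -/
theorem inaba_integral_formula
    {T : ℝ} (hT : 0 < T)
    (x y z x' y' z' : ℝ → ℝ)
    (hx : ∀ t ∈ Icc 0 T, HasDerivAt x (x' t) t)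
    (hy : ∀ t ∈ Icc 0 T, HasDerivAt y (y' t) t)
    (hz : ∀ t ∈ Icc 0 T, HasDerivAt z (z' t) t)
    (hx' : ContinuousOn x' (Icc 0 T))
    (hy' : ContinuousOn y' (Icc 0 T))
    (hz' : ContinuousOn z' (Icc 0 T))
    (hD1 : ∀ t ∈ Icc 0 T, y' t = z t * x' t)
    (hD2 : ∀ t ∈ Icc 0 T, z' t = t * x' t)
    (hx0 : x 0 = 0) (hy0 : y 0 = 0) (hz0 : z 0 = 0) :
    (y T = z T ^ 2 / (2 * T) + ∫ t in (0 : ℝ)..T, z t ^ 2 / (2 * t ^ 2)) ∧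
    z T ^ 2 / (2 * T) ≤ y T ∧ 0 ≤ z T ^ 2 / (2 * T) ∧
    (y T = 0 ↔ ∀ t ∈ Icc 0 T, z t = 0) := by
  set g : ℝ → ℝ := fun t => z t ^ 2 / (2 * t ^ 2) with hgdef
  set F : ℝ → ℝ := fun t => y t - z t ^ 2 / (2 * t) with hFdef
  have h0mem : (0 : ℝ) ∈ Icc (0 : ℝ) T := ⟨le_refl 0, hT.le⟩
  have hTmem : T ∈ Icc (0 : ℝ) T := ⟨hT.le, le_refl T⟩
  have hzc : ContinuousOn z (Icc 0 T) := fun t ht =>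
    (hz t ht).continuousAt.continuousWithinAt
  have hyc : ContinuousOn y (Icc 0 T) := fun t ht =>
    (hy t ht).continuousAt.continuousWithinAt
  have hz'0 : z' 0 = 0 := by rw [hD2 0 h0mem]; ring
  -- the slope of z at 0 tends to 0
  have hslope : Tendsto (fun t => z t / t) (𝓝[≠] (0 : ℝ)) (𝓝 0) := by
    have h1 := hasDerivAt_iff_tendsto_slope.mp (hz 0 h0mem)
    rw [hz'0] at h1
    have : (slope z 0) = fun t => z t / t := by
      funext t; simp [slope_def_field, hz0]
    rwa [this] at h1
  -- nonnegativity of the integrand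
  have gnn : ∀ t : ℝ, 0 ≤ g t := fun t =>
    div_nonneg (sq_nonneg _) (by positivity)
  -- pointwise rewriting of g
  have hgeq : ∀ t : ℝ, g t = (z t / t) ^ 2 / 2 := by
    intro t
    rw [hgdef]
    rw [div_pow, div_div, mul_comm]
  -- g is continuous on [0, T]
  have hgIcc : ContinuousOn g (Icc 0 T) := by
    intro t ht
    rcases eq_or_lt_of_le ht.1 with h0 | h0
    · subst h0
      rw [← continuousWithinAt_diff_self]
      have hgv : g 0 = 0 := by simp [hgdef, hz0]
      unfold ContinuousWithinAt
      rw [hgv]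
      have hmono : 𝓝[Icc (0:ℝ) T \ {0}] (0:ℝ) ≤ 𝓝[≠] (0:ℝ) :=
        nhdsWithin_mono _ (fun s hs => hs.2)
      have h2 : Tendsto (fun t => (z t / t) ^ 2 / 2) (𝓝[≠] (0:ℝ)) (𝓝 0) := by
        have := (hslope.pow 2).div_const 2
        simpa using this
      have := h2.mono_left hmono
      exact this.congr (fun s => (hgeq s).symm)
    · have ht0 : t ≠ 0 := ne_of_gt h0
      exact ((hzc t ht).pow 2).div
        ((continuous_const.mul (continuous_pow 2)).continuousWithinAt)
        (by positivity)
  -- F is continuous on [0, T]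
  have hzt2eq : ∀ t : ℝ, z t ^ 2 / (2 * t) = z t / t * z t / 2 := by
    intro t
    rw [div_mul_eq_mul_div, div_div, pow_two, mul_comm t 2]
  have hFc : ContinuousOn F (Icc 0 T) := by
    intro t ht
    rcases eq_or_lt_of_le ht.1 with h0 | h0
    · subst h0
      rw [← continuousWithinAt_diff_self]
      have hFv : F 0 = 0 := by simp [hFdef, hy0, hz0]
      unfold ContinuousWithinAt
      rw [hFv]
      have hmono : 𝓝[Icc (0:ℝ) T \ {0}] (0:ℝ) ≤ 𝓝[Icc (0:ℝ) T] (0:ℝ) :=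
        nhdsWithin_mono _ (fun s hs => hs.1)
      have hmono' : 𝓝[Icc (0:ℝ) T \ {0}] (0:ℝ) ≤ 𝓝[≠] (0:ℝ) :=
        nhdsWithin_mono _ (fun s hs => hs.2)
      have hzt : Tendsto z (𝓝[Icc (0:ℝ) T \ {0}] (0:ℝ)) (𝓝 0) := by
        have := (hzc 0 h0mem).mono_left hmono
        rwa [hz0] at this
      have hy0' : Tendsto y (𝓝[Icc (0:ℝ) T \ {0}] (0:ℝ)) (𝓝 0) := by
        have := (hyc 0 h0mem).mono_left hmono
        rwa [hy0] at this
      have hprod : Tendsto (fun t => z t / t * z t / 2)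
          (𝓝[Icc (0:ℝ) T \ {0}] (0:ℝ)) (𝓝 0) := by
        have := ((hslope.mono_left hmono').mul hzt).div_const 2
        simpa using this
      have := hy0'.sub hprod
      rw [sub_zero] at this
      exact this.congr (fun s => by rw [hFdef]; simp only; rw [hzt2eq s])
    · have ht0 : (2 : ℝ) * t ≠ 0 := by positivity
      exact (hyc t ht).sub (((hzc t ht).pow 2).div
        ((continuous_const.mul continuous_id).continuousWithinAt) ht0)
  -- derivative of F on (0, T)
  have hF' : ∀ t ∈ Ioo (0 : ℝ) T, HasDerivAt F (g t) t := by
    intro t ht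
    have htIcc : t ∈ Icc (0 : ℝ) T := ⟨ht.1.le, ht.2.le⟩
    have ht0 : t ≠ 0 := ne_of_gt ht.1
    have hden : HasDerivAt (fun s : ℝ => 2 * s) 2 t := by
      simpa using (hasDerivAt_id t).const_mul (2 : ℝ)
    have hnum : HasDerivAt (fun s => z s ^ 2) (2 * z t * z' t) t := by
      have := (hz t htIcc).fun_pow 2
      simpa [mul_comm, mul_assoc, mul_left_comm] using this
    have hne : (2 : ℝ) * t ≠ 0 := by positivity
    have hdiv : HasDerivAt (fun s => z s ^ 2 / (2 * s))
        ((2 * z t * z' t * (2 * t) - z t ^ 2 * 2) / (2 * t) ^ 2) t :=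
      hnum.div hden hne
    have hsub := (hy t htIcc).fun_sub hdiv
    refine hsub.congr_deriv ?_
    symm
    rw [hgdef]
    simp only
    rw [hD1 t htIcc, hD2 t htIcc]
    field_simp
    ring
  -- integrability
  have hgint : IntervalIntegrable g MeasureTheory.volume 0 T := by
    apply ContinuousOn.intervalIntegrable
    rwa [uIcc_of_le hT.le]
  -- fundamental theorem of calculus
  have key : (∫ t in (0 : ℝ)..T, g t) = F T - F 0 :=
    integral_eq_sub_of_hasDeriv_right_of_le hT.le hFc
      (fun t ht => (hF' t ht).hasDerivWithinAt) hgint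
  have hF0 : F 0 = 0 := by simp [hFdef, hy0, hz0]
  have hmain : y T = z T ^ 2 / (2 * T) + ∫ t in (0 : ℝ)..T, g t := by
    rw [key, hF0, hFdef]
    simp only
    ring
  have hintnn : 0 ≤ ∫ t in (0 : ℝ)..T, g t :=
    intervalIntegral.integral_nonneg hT.le (fun u _ => gnn u)
  have hfrac_nn : 0 ≤ z T ^ 2 / (2 * T) := div_nonneg (sq_nonneg _) (by linarith)
  refine ⟨hmain, by linarith, hfrac_nn, ?_, ?_⟩
  · -- y T = 0 → z ≡ 0
    intro hyT0
    have hint0 : (∫ t in (0 : ℝ)..T, g t) = 0 := by linarith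
    have hzT2 : z T ^ 2 / (2 * T) = 0 := by linarith
    intro t ht
    rcases eq_or_lt_of_le ht.1 with h0 | h0
    · rw [← h0]; exact hz0
    by_contra hne
    have hgt : 0 < g t :=
      div_pos (pow_two_pos_of_ne_zero hne) (by positivity)
    -- find a small interval to the left of t where g is large
    have hev : ∀ᶠ s in 𝓝[Icc (0:ℝ) T] t, g t / 2 < g s :=
      (hgIcc t ht).eventually (eventually_gt_nhds (by linarith))
    rw [eventually_nhdsWithin_iff] at hev
    rcases Metric.eventually_nhds_iff.mp hev with ⟨δ, hδ, hball⟩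
    set a : ℝ := max (t - δ / 2) (t / 2) with hadef
    have ha0 : 0 < a := lt_of_lt_of_le (by linarith) (le_max_right _ _)
    have hat : a < t := max_lt (by linarith) (by linarith)
    have haT : a ≤ T := hat.le.trans ht.2
    have hsub : ∀ s ∈ Ioo a t, s ∈ Icc (0:ℝ) T ∧ dist s t < δ := by
      rintro s ⟨hs1, hs2⟩
      have hs0 : 0 < s := ha0.trans hs1
      have hsT : s ≤ T := hs2.le.trans ht.2
      refine ⟨⟨hs0.le, hsT⟩, ?_⟩
      have hle : t - δ / 2 ≤ a := le_max_left _ _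
      rw [Real.dist_eq, abs_of_neg (by linarith : s - t < 0)]
      linarith
    have hpos_on : ∀ s ∈ Ioo a t, 0 < g s := by
      intro s hs
      obtain ⟨hsIcc, hsd⟩ := hsub s hs
      have := hball hsd hsIcc
      linarith
    have hsubint : ∀ c d : ℝ, 0 ≤ c → c ≤ d → d ≤ T →
        IntervalIntegrable g MeasureTheory.volume c d := by
      intro c d hc hcd hd
      apply hgint.mono_set
      rw [uIcc_of_le hT.le, uIcc_of_le hcd]
      exact fun s hs => ⟨hc.trans hs.1, hs.2.trans hd⟩
    have hi1 : IntervalIntegrable g MeasureTheory.volume 0 a := hsubint 0 a (le_refl _) ha0.le haT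
    have hi2 : IntervalIntegrable g MeasureTheory.volume a t := hsubint a t ha0.le hat.le ht.2
    have hi3 : IntervalIntegrable g MeasureTheory.volume t T := hsubint t T h0.le ht.2 (le_refl _)
    have hposmid : 0 < ∫ s in a..t, g s :=
      intervalIntegral_pos_of_pos_on hi2 hpos_on hat
    have hnn1 : 0 ≤ ∫ s in (0:ℝ)..a, g s :=
      intervalIntegral.integral_nonneg ha0.le (fun u _ => gnn u)
    have hnn3 : 0 ≤ ∫ s in t..T, g s :=
      intervalIntegral.integral_nonneg ht.2 (fun u _ => gnn u)
    have hadd1 : (∫ s in a..t, g s) + ∫ s in t..T, g s = ∫ s in a..T, g s :=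
      intervalIntegral.integral_add_adjacent_intervals hi2 hi3
    have hadd2 : (∫ s in (0:ℝ)..a, g s) + ∫ s in a..T, g s = ∫ s in (0:ℝ)..T, g s :=
      intervalIntegral.integral_add_adjacent_intervals hi1 (hsubint a T ha0.le haT (le_refl _))
    linarith
  · -- z ≡ 0 → y T = 0
    intro hzero
    have hzT : z T = 0 := hzero T hTmem
    have hintz : (∫ t in (0 : ℝ)..T, g t) = 0 := by
      rw [intervalIntegral.integral_congr (g := fun _ => (0:ℝ))
        (fun s hs => by
          rw [uIcc_of_le hT.le] at hs
          simp [hgdef, hzero s hs])]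
      simp
    rw [hmain, hintz, hzT]
    simp
end
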